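/- For every a > 0 and every τ ≥ 0, the Gaussian scale-mixture representation of the exponential function holds: ∫_0^∞ (1/(a√π)) exp(−t²/(4a²)) exp(−τ²/t²) dt = exp(−τ/a). -/

import Mathlib

open MeasureTheory Real Set

lemma glasser_key (a τ : ℝ) (ha : 0 < a) (hτ : 0 < τ) :
    ∫ t in Set.Ioi (0:ℝ), Real.exp (-(t / (2*a) - τ / t) ^ 2) = a * Real.sqrt Real.pi := by
  set g : ℝ → ℝ := fun t => t / (2*a) - τ / t with hg
  set g' : ℝ → ℝ := fun t => 1 / (2*a) + τ / t ^ 2 with hg'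
  have hderiv : ∀ t ∈ Set.Ioi (0:ℝ), HasDerivWithinAt g (g' t) (Set.Ioi 0) t := by
    intro t ht
    have ht0 : t ≠ 0 := ne_of_gt ht
    have h1 : HasDerivAt g (1/(2*a) - τ * (-(t^2)⁻¹)) t := by
      have := ((hasDerivAt_id t).div_const (2*a)).sub ((hasDerivAt_inv ht0).const_mul τ)
      simpa [hg, div_eq_mul_inv, Pi.sub_def] using this
    have : HasDerivAt g (g' t) t := by
      convert h1 using 1
      simp only [hg']
      field_simp
      ring
    exact this.hasDerivWithinAt
  have hgpos : ∀ t ∈ Set.Ioi (0:ℝ), 0 < g' t := by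
    intro t ht
    have ht' : (0:ℝ) < t := ht
    have h1 : 0 < τ / t ^ 2 := div_pos hτ (pow_pos ht' 2)
    have h2 : 0 < 1/(2*a) := by positivity
    simp only [hg']
    linarith
  have hinj : Set.InjOn g (Set.Ioi 0) := by
    intro x hx y hy h
    simp only [hg] at h
    have hx0 : (0:ℝ) < x := hx
    have hy0 : (0:ℝ) < y := hy
    field_simp at h
    have h2 : (x - y) * ((x*y + 2*a*τ) * (2*a)) = 0 := by linear_combination (2*a) * h
    have h3 : (0:ℝ) < (x*y + 2*a*τ) * (2*a) := by
      have h5 := mul_pos hx0 hy0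
      have h6 := mul_pos ha hτ
      have : (0:ℝ) < x*y + 2*a*τ := by linarith
      exact mul_pos this (by linarith)
    rcases mul_eq_zero.mp h2 with h4 | h4
    · linarith
    · linarith
  have himg : g '' Set.Ioi 0 = Set.univ := by
    ext s
    simp only [Set.mem_univ, iff_true, Set.mem_image]
    set d := Real.sqrt (s^2 + 2*τ/a) with hd
    have hD : (0:ℝ) < s^2 + 2*τ/a := by positivity
    have hd2 : d^2 = s^2 + 2*τ/a := Real.sq_sqrt hD.le
    have hd2' : a * d^2 = a * s^2 + 2*τ := by rw [hd2]; field_simp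
    have hds : -s < d := by
      nlinarith [Real.sqrt_nonneg (s^2 + 2*τ/a), div_pos (by linarith : (0:ℝ) < 2*τ) ha]
    have hsd : 0 < s + d := by linarith
    refine ⟨a * (s + d), mul_pos ha hsd, ?_⟩
    simp only [hg]
    field_simp
    nlinarith [hd2']
  have hIexp : Integrable (fun x : ℝ => Real.exp (-x^2)) := by
    simpa using integrable_exp_neg_mul_sq (by norm_num : (0:ℝ) < 1)
  -- substitution A : total mass
  have hA : ∫ t in Set.Ioi (0:ℝ), g' t * Real.exp (-(g t)^2) = Real.sqrt Real.pi := by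
    have h := integral_image_eq_integral_abs_deriv_smul (measurableSet_Ioi) hderiv hinj
      (fun x : ℝ => Real.exp (-x^2))
    rw [himg] at h
    simp only [smul_eq_mul] at h
    rw [MeasureTheory.setIntegral_univ] at h
    have h2 : ∀ t ∈ Set.Ioi (0:ℝ), |g' t| * Real.exp (-(g t)^2) = g' t * Real.exp (-(g t)^2) := by
      intro t ht; rw [abs_of_pos (hgpos t ht)]
    rw [setIntegral_congr_fun measurableSet_Ioi h2] at h
    rw [← h]
    simpa using integral_gaussian 1
  have hIntA : IntegrableOn (fun t => g' t * Real.exp (-(g t)^2)) (Set.Ioi 0) := by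
    have h := (integrableOn_image_iff_integrableOn_abs_deriv_smul (measurableSet_Ioi) hderiv hinj
      (fun x : ℝ => Real.exp (-x^2))).mp (by rw [himg]; exact hIexp.integrableOn)
    simp only [smul_eq_mul] at h
    refine h.congr_fun ?_ measurableSet_Ioi
    intro t ht; dsimp only; rw [abs_of_pos (hgpos t ht)]
  -- substitution B : t ↦ 2aτ/t
  set φ : ℝ → ℝ := fun t => 2*a*τ/t with hφ
  have haτ : (0:ℝ) < 2*a*τ := by positivity
  have hφderiv : ∀ t ∈ Set.Ioi (0:ℝ), HasDerivWithinAt φ (-(2*a*τ)/t^2) (Set.Ioi 0) t := by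
    intro t ht
    have ht0 : t ≠ 0 := ne_of_gt ht
    have h1 : HasDerivAt φ ((2*a*τ) * (-(t^2)⁻¹)) t := by
      have := (hasDerivAt_inv ht0).const_mul (2*a*τ)
      simpa [hφ, div_eq_mul_inv] using this
    have : HasDerivAt φ (-(2*a*τ)/t^2) t := by
      convert h1 using 1
      field_simp
    exact this.hasDerivWithinAt
  have hφinj : Set.InjOn φ (Set.Ioi 0) := by
    intro x hx y hy hxy
    simp only [hφ] at hxy
    have hx0 : (0:ℝ) < x := hx
    have hy0 : (0:ℝ) < y := hy
    field_simp at hxy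
    exact hxy.symm
  have hφimg : φ '' Set.Ioi 0 = Set.Ioi 0 := by
    ext s
    simp only [Set.mem_image, Set.mem_Ioi]
    constructor
    · rintro ⟨t, ht, rfl⟩
      exact div_pos haτ ht
    · intro hs
      refine ⟨2*a*τ/s, div_pos haτ hs, ?_⟩
      simp only [hφ]
      field_simp
  have hB : ∫ x in Set.Ioi (0:ℝ), Real.exp (-(g x)^2)
      = ∫ t in Set.Ioi (0:ℝ), (2*a*τ/t^2) * Real.exp (-(g t)^2) := by
    have h := integral_image_eq_integral_abs_deriv_smul (measurableSet_Ioi) hφderiv hφinj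
      (fun x : ℝ => Real.exp (-(g x)^2))
    rw [hφimg] at h
    simp only [smul_eq_mul] at h
    rw [h]
    refine setIntegral_congr_fun measurableSet_Ioi ?_
    intro t ht
    have ht0 : (0:ℝ) < t := ht
    have habs : |(-(2*a*τ)/t^2)| = 2*a*τ/t^2 := by
      rw [abs_div, abs_neg, abs_of_pos haτ, abs_of_pos (pow_pos ht0 2)]
    have harg : g (φ t) = -(g t) := by
      simp only [hg, hφ]
      field_simp
      ring
    dsimp only
    rw [habs, harg]
    ring_nf
  -- integrability of the pieces
  have hmeasg : Measurable (fun x : ℝ => Real.exp (-(g x)^2)) := by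
    simp only [hg]
    fun_prop
  have hIg : IntegrableOn (fun x : ℝ => Real.exp (-(g x)^2)) (Set.Ioi 0) := by
    refine Integrable.mono (hIntA.const_mul (2*a)) hmeasg.aestronglyMeasurable.restrict ?_
    refine (ae_restrict_iff' measurableSet_Ioi).mpr (ae_of_all _ fun x hx => ?_)
    have hx0 : (0:ℝ) < x := hx
    have h1 : (0:ℝ) < g' x := hgpos x hx
    have he := Real.exp_pos (-(g x)^2)
    have h2 : 1 ≤ 2*a * g' x := by
      simp only [hg']
      have h3 : 0 < τ / x^2 := div_pos hτ (pow_pos hx0 2)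
      have h4 : 2*a * (1/(2*a)) = 1 := by field_simp
      nlinarith
    have hrhs : (0:ℝ) < 2*a * (g' x * Real.exp (-(g x)^2)) := by positivity
    rw [Real.norm_eq_abs, Real.norm_eq_abs, abs_of_pos he, abs_of_pos hrhs]
    nlinarith [mul_le_mul_of_nonneg_right h2 he.le]
  have hI2 : IntegrableOn (fun t : ℝ => (2*a*τ/t^2) * Real.exp (-(g t)^2)) (Set.Ioi 0) := by
    have hmeas2 : Measurable (fun t : ℝ => (2*a*τ/t^2) * Real.exp (-(g t)^2)) := by
      simp only [hg]
      fun_prop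
    refine Integrable.mono (hIntA.const_mul (2*a)) hmeas2.aestronglyMeasurable.restrict ?_
    refine (ae_restrict_iff' measurableSet_Ioi).mpr (ae_of_all _ fun x hx => ?_)
    have hx0 : (0:ℝ) < x := hx
    have h1 : (0:ℝ) < g' x := hgpos x hx
    have he := Real.exp_pos (-(g x)^2)
    have h2 : 2*a*τ/x^2 ≤ 2*a * g' x := by
      simp only [hg']
      have h4 : 2*a * (1/(2*a)) = 1 := by field_simp
      have h5 : 2*a * (1/(2*a) + τ/x^2) = 1 + 2*a*τ/x^2 := by field_simp
      rw [h5]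
      linarith
    have hlhs : (0:ℝ) < (2*a*τ/x^2) * Real.exp (-(g x)^2) :=
      mul_pos (div_pos haτ (pow_pos hx0 2)) he
    have hrhs : (0:ℝ) < 2*a * (g' x * Real.exp (-(g x)^2)) := by positivity
    rw [Real.norm_eq_abs, Real.norm_eq_abs, abs_of_pos hlhs, abs_of_pos hrhs]
    have := mul_le_mul_of_nonneg_right h2 he.le
    nlinarith
  -- combine
  have hsplit : ∫ t in Set.Ioi (0:ℝ), g' t * Real.exp (-(g t)^2)
      = ∫ t in Set.Ioi (0:ℝ), ((1/(2*a)) * Real.exp (-(g t)^2)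
        + (1/(2*a)) * ((2*a*τ/t^2) * Real.exp (-(g t)^2))) := by
    refine setIntegral_congr_fun measurableSet_Ioi fun t ht => ?_
    have ht0 : (0:ℝ) < t := ht
    simp only [hg']
    field_simp
  rw [hsplit, integral_add (hIg.const_mul _) (hI2.const_mul _), integral_const_mul, integral_const_mul, ← hB] at hA
  have hmain : ∫ x in Set.Ioi (0:ℝ), Real.exp (-(g x)^2) = a * Real.sqrt Real.pi := by
    have ha2 : (2*a) ≠ 0 := by positivity
    field_simp at hA
    linarith
  simpa only [hg] using hmain

/-- Gaussian scale-mixture representation of the exponential function: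
`∫_0^∞ (1/(a√π)) exp(−t²/(4a²)) exp(−τ²/t²) dt = exp(−τ/a)`. -/
theorem exp_as_gaussian_scale_mixture (a τ : ℝ) (ha : 0 < a) (hτ : 0 ≤ τ) :
    ∫ t in Set.Ioi (0:ℝ),
        (1 / (a * Real.sqrt Real.pi)) * Real.exp (-t ^ 2 / (4 * a ^ 2)) *
          Real.exp (-τ ^ 2 / t ^ 2) =
      Real.exp (-τ / a) := by
  have hπ : (0:ℝ) < Real.sqrt Real.pi := Real.sqrt_pos.mpr Real.pi_pos
  have haπ : a * Real.sqrt Real.pi ≠ 0 := by positivity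
  rcases eq_or_lt_of_le hτ with h0 | hτ'
  · -- τ = 0
    subst h0
    simp only [ne_eq, OfNat.ofNat_ne_zero, not_false_eq_true, zero_pow, neg_zero, zero_div,
      Real.exp_zero, mul_one]
    have hcongr : ∀ t ∈ Set.Ioi (0:ℝ),
        (1 / (a * Real.sqrt Real.pi)) * Real.exp (-t ^ 2 / (4 * a ^ 2))
        = (1 / (a * Real.sqrt Real.pi)) * Real.exp (-(1/(4*a^2)) * t ^ 2) := by
      intro t ht
      congr 1
      congr 1
      field_simp
    rw [setIntegral_congr_fun measurableSet_Ioi hcongr, integral_const_mul,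
      integral_gaussian_Ioi]
    have h1 : Real.pi / (1/(4*a^2)) = (2*a)^2 * Real.pi := by field_simp; ring
    rw [h1, Real.sqrt_mul (by positivity), Real.sqrt_sq (by positivity : (0:ℝ) ≤ 2*a)]
    field_simp
  · -- τ > 0
    have key := glasser_key a τ ha hτ'
    have hcongr : ∀ t ∈ Set.Ioi (0:ℝ),
        (1 / (a * Real.sqrt Real.pi)) * Real.exp (-t ^ 2 / (4 * a ^ 2)) *
          Real.exp (-τ ^ 2 / t ^ 2)
        = ((1 / (a * Real.sqrt Real.pi)) * Real.exp (-τ / a)) *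
            Real.exp (-(t / (2*a) - τ / t) ^ 2) := by
      intro t ht
      have ht0 : (0:ℝ) < t := ht
      rw [mul_assoc, mul_assoc, ← Real.exp_add, ← Real.exp_add]
      congr 2
      field_simp
      ring
    rw [setIntegral_congr_fun measurableSet_Ioi hcongr, integral_const_mul, key]
    field_simp
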